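/- For every non-edge {x,y} of G (x ≠ y, x - y ∉ S), there is a graph automorphism of G mapping {x,y} to either {0, α^10} or {0, α^14}. -/
import Mathlib


open SimpleGraph

/-- The set of nonzero cubes in a field. -/
def cubes (F : Type) [Field F] : Set F := {s | ∃ x : F, x ≠ 0 ∧ x ^ 3 = s}

/-- The Cayley graph on `F` with connection set the nonzero cubes:
`x ~ y` iff `x - y` is a nonzero cube. -/
def cayley (F : Type) [Field F] : SimpleGraph F :=
  SimpleGraph.fromRel (fun x y => x - y ∈ cubes F)

/-- `v : Fin n → V` is an induced path on `n` vertices in `G`. -/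
def IsInducedPath {V : Type} (G : SimpleGraph V) {n : ℕ} (v : Fin n → V) : Prop :=
  Function.Injective v ∧
    ∀ i j : Fin n, G.Adj (v i) (v j) ↔ (i.val + 1 = j.val ∨ j.val + 1 = i.val)

lemma mem_cubes_iff {F : Type} [Field F] [Fintype F] (hF : Fintype.card F = 16)
    (s : F) : s ∈ cubes F ↔ s ≠ 0 ∧ s ^ 5 = 1 := by
  constructor
  · rintro ⟨c, hc0, rfl⟩
    refine ⟨pow_ne_zero _ hc0, ?_⟩
    have h := FiniteField.pow_card_sub_one_eq_one c hc0
    rw [hF] at h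
    rw [← pow_mul]
    norm_num at h ⊢
    exact h
  · rintro ⟨h0, h5⟩
    refine ⟨s ^ 2, pow_ne_zero _ h0, ?_⟩
    rw [← pow_mul, show 2 * 3 = 5 + 1 from rfl, pow_succ, h5, one_mul]

lemma exists_cayley_iso {F : Type} [Field F] [Fintype F] (hF : Fintype.card F = 16)
    {s : F} (hs0 : s ≠ 0) (hs5 : s ^ 5 = 1) (y : F) :
    ∃ θ : cayley F ≃g cayley F, ∀ z, θ z = s * (z - y) := by
  have key : ∀ w : F, s * w ∈ cubes F ↔ w ∈ cubes F := by
    intro w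
    rw [mem_cubes_iff hF, mem_cubes_iff hF]
    constructor
    · rintro ⟨h0, h5⟩
      have hw0 : w ≠ 0 := fun h => h0 (by simp [h])
      refine ⟨hw0, ?_⟩
      have h : s ^ 5 * w ^ 5 = 1 := by rw [← mul_pow]; exact h5
      rwa [hs5, one_mul] at h
    · rintro ⟨h0, h5⟩
      exact ⟨mul_ne_zero hs0 h0, by rw [mul_pow, hs5, h5, one_mul]⟩
  let e : F ≃ F := (Equiv.subRight y).trans (Equiv.mulLeft₀ s hs0)
  have he : ∀ z, e z = s * (z - y) := fun z => rfl
  refine ⟨⟨e, ?_⟩, he⟩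
  intro z1 z2
  show (cayley F).Adj (e z1) (e z2) ↔ (cayley F).Adj z1 z2
  rw [he, he]
  simp only [cayley, SimpleGraph.fromRel_adj]
  have e1 : s * (z1 - y) - s * (z2 - y) = s * (z1 - z2) := by ring
  have e2 : s * (z2 - y) - s * (z1 - y) = s * (z2 - z1) := by ring
  have e3 : (s * (z1 - y) ≠ s * (z2 - y)) ↔ z1 ≠ z2 := by
    rw [ne_eq, mul_right_inj' hs0, sub_left_inj]
  rw [e1, e2, e3, key, key]

theorem stmt12 (F : Type) [Field F] [Fintype F] (hF : Fintype.card F = 16)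
    (a : F) (ha : a ^ 4 + a + 1 = 0)
    (x y : F) (hxy : x ≠ y) (hne : ¬ (cayley F).Adj x y) :
    ∃ θ : cayley F ≃g cayley F,
      ({θ x, θ y} : Set F) = {0, 1 + a + a ^ 2} ∨
      ({θ x, θ y} : Set F) = {0, 1 + a ^ 3} := by
  have h16 : (16 : F) = 0 := by
    have h := Nat.cast_card_eq_zero F
    rw [hF] at h
    exact_mod_cast h
  have h2 : (2 : F) = 0 := by
    have h4 : (2 : F) ^ 4 = 0 := by rw [show ((2:F)^4) = 16 by norm_num]; exact h16
    exact pow_eq_zero_iff (by norm_num) |>.mp h4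
  -- key power computations
  have hu5 : (1 + a + a ^ 2) ^ 5 = a ^ 2 + a := by
    linear_combination (a^6 + 5*a^5 + 15*a^4 + 29*a^3 + 39*a^2 + 31*a + 1) * ha
      + (-19*a^3 - 28*a^2 - 14*a) * h2
  have hv5 : (1 + a ^ 3) ^ 5 = a ^ 2 + a + 1 := by
    linear_combination (a^11 + 4*a^8 - a^7 + 6*a^5 - 3*a^4 + a^3 + 4*a^2 - 3*a + 2) * ha
      + (-a^2 - 1) * h2
  have hune : (1 + a + a ^ 2) ≠ 0 := by
    intro h
    have : (1 : F) = 0 := by linear_combination ha - (a^2 - a) * h - a * h2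
    exact one_ne_zero this
  have hvne : (1 + a ^ 3) ≠ 0 := by
    intro h
    have : (1 : F) = 0 := by linear_combination ha - a * h
    exact one_ne_zero this
  set d := x - y with hd
  have hd0 : d ≠ 0 := sub_ne_zero.mpr hxy
  have hdnc : d ∉ cubes F := by
    intro h
    exact hne ((SimpleGraph.fromRel_adj _ _ _).mpr ⟨hxy, Or.inl h⟩)
  have hd5ne : d ^ 5 ≠ 1 := by
    intro h
    exact hdnc ((mem_cubes_iff hF d).mpr ⟨hd0, h⟩)
  have hd15 : d ^ 15 = 1 := by
    have h := FiniteField.pow_card_sub_one_eq_one d hd0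
    rw [hF] at h
    norm_num at h
    exact h
  have hz : (d ^ 5 - 1) * (d ^ 5 * d ^ 5 + d ^ 5 + 1) = 0 := by
    linear_combination hd15
  have hquad : d ^ 5 * d ^ 5 + d ^ 5 + 1 = 0 := by
    rcases mul_eq_zero.mp hz with h | h
    · exact absurd (sub_eq_zero.mp h) hd5ne
    · exact h
  have hfac : (d ^ 5 - (a ^ 2 + a)) * (d ^ 5 - (a ^ 2 + a + 1)) = 0 := by
    linear_combination hquad + ha + (-(1 + a^2 + a) * d^5 + a^3 + a^2 - 1) * h2
  rcases mul_eq_zero.mp hfac with h | h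
  · -- d^5 = a^2 + a = (1+a+a^2)^5
    have hdu : d ^ 5 = a ^ 2 + a := sub_eq_zero.mp h
    have hX0 : (a ^ 2 + a) ≠ 0 := hdu ▸ pow_ne_zero 5 hd0
    set s := (1 + a + a ^ 2) * d⁻¹ with hs
    have hs0 : s ≠ 0 := mul_ne_zero hune (inv_ne_zero hd0)
    have hs5 : s ^ 5 = 1 := by
      rw [hs, mul_pow, hu5, inv_pow, hdu, mul_inv_cancel₀ hX0]
    obtain ⟨θ, hθ⟩ := exists_cayley_iso hF hs0 hs5 y
    refine ⟨θ, Or.inl ?_⟩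
    have hθx : θ x = 1 + a + a ^ 2 := by
      rw [hθ, hs, ← hd]
      field_simp
    have hθy : θ y = 0 := by rw [hθ]; simp
    rw [hθx, hθy, Set.pair_comm]
  · -- d^5 = a^2 + a + 1 = (1+a^3)^5
    have hdv : d ^ 5 = a ^ 2 + a + 1 := sub_eq_zero.mp h
    have hX0 : (a ^ 2 + a + 1) ≠ 0 := hdv ▸ pow_ne_zero 5 hd0
    set s := (1 + a ^ 3) * d⁻¹ with hs
    have hs0 : s ≠ 0 := mul_ne_zero hvne (inv_ne_zero hd0)
    have hs5 : s ^ 5 = 1 := by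
      rw [hs, mul_pow, hv5, inv_pow, hdv, mul_inv_cancel₀ hX0]
    obtain ⟨θ, hθ⟩ := exists_cayley_iso hF hs0 hs5 y
    refine ⟨θ, Or.inr ?_⟩
    have hθx : θ x = 1 + a ^ 3 := by
      rw [hθ, hs, ← hd]
      field_simp
    have hθy : θ y = 0 := by rw [hθ]; simp
    rw [hθx, hθy, Set.pair_comm]
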